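/- Let f be differentiable with L-Lipschitz gradient and g : ℝ^n → ℝ convex, F = f + g. Let s, α > 0, x ∈ ℝ^n, and define y = prox_{sg}(x - s∇f(x)) and x⁺ = prox_{αg}(x - α∇f(y)). Then F(x) - F(x⁺) ≥ (1/(2α))‖x - x⁺‖² + (1/s - L/2 - 1/(2α))‖x - y‖² + (1/(2α) - L/2)‖y - x⁺‖². -/

import Mathlib

open scoped RealInnerProductSpace

variable {E : Type*} [NormedAddCommGroup E] [InnerProductSpace ℝ E]

lemma prox_subgrad (g : E → ℝ) (hg : ConvexOn ℝ Set.univ g) (t : ℝ) (ht : 0 < t)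
    (u p : E) (hmin : ∀ w, g p + ‖p - u‖ ^ 2 / (2 * t) ≤ g w + ‖w - u‖ ^ 2 / (2 * t))
    (w : E) : g p + (1 / t) * ⟪u - p, w - p⟫ ≤ g w := by
  set v := w - p with hv
  set I := ⟪u - p, v⟫ with hI
  -- step 1: for θ ∈ (0,1), 0 ≤ 2t(g w - g p) - 2I + θ‖v‖²
  have key : ∀ θ : ℝ, θ ∈ Set.Ioo (0:ℝ) 1 →
      -(θ * ‖v‖ ^ 2) ≤ 2 * t * (g w - g p) - 2 * I := by
    intro θ hθ
    obtain ⟨hθ0, hθ1⟩ := hθ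
    have hmem : p + θ • v = (1 - θ) • p + θ • w := by
      rw [hv]; module
    have hconv : g (p + θ • v) ≤ (1 - θ) * g p + θ * g w := by
      rw [hmem]
      exact hg.2 (Set.mem_univ p) (Set.mem_univ w) (by linarith) hθ0.le (by ring)
    have hexp : ‖p + θ • v - u‖ ^ 2 = ‖p - u‖ ^ 2 + 2 * θ * ⟪p - u, v⟫ + θ ^ 2 * ‖v‖ ^ 2 := by
      have : p + θ • v - u = (p - u) + θ • v := by abel
      rw [this, norm_add_sq_real, real_inner_smul_right, norm_smul]
      simp [abs_of_nonneg hθ0.le]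
      ring
    have h1 := hmin (p + θ • v)
    have h2t : (0:ℝ) < 2 * t := by positivity
    have h1' : 2 * t * (g p) + ‖p - u‖ ^ 2 ≤ 2 * t * (g (p + θ • v)) + ‖p + θ • v - u‖ ^ 2 := by
      have h2 := mul_le_mul_of_nonneg_left h1 h2t.le
      rw [mul_add, mul_add, mul_div_cancel₀ _ h2t.ne', mul_div_cancel₀ _ h2t.ne'] at h2
      exact h2
    have hIP : ⟪p - u, v⟫ = -I := by
      rw [hI, ← inner_neg_left]; congr 1; abel
    have h3 : 0 ≤ θ * (2 * t * (g w - g p) - 2 * I + θ * ‖v‖ ^ 2) := by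
      rw [hexp, hIP] at h1'
      nlinarith [mul_le_mul_of_nonneg_left hconv h2t.le]
    have h4 := (mul_le_mul_iff_right₀ hθ0).mp (by linarith : θ * 0 ≤ θ * (2 * t * (g w - g p) - 2 * I + θ * ‖v‖ ^ 2))
    linarith
  have hlim : (0:ℝ) ≤ 2 * t * (g w - g p) - 2 * I := by
    have htend : Filter.Tendsto (fun θ : ℝ => -(θ * ‖v‖ ^ 2)) (nhdsWithin 0 (Set.Ioi 0)) (nhds 0) := by
      have : Filter.Tendsto (fun θ : ℝ => -(θ * ‖v‖ ^ 2)) (nhds 0) (nhds (-(0 * ‖v‖ ^ 2))) := by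
        exact ((continuous_id.mul continuous_const).neg).tendsto 0
      simpa using this.mono_left nhdsWithin_le_nhds
    refine le_of_tendsto htend ?_
    filter_upwards [Ioo_mem_nhdsGT (zero_lt_one' ℝ)] with θ hθ
    exact key θ hθ
  have h6 := mul_le_mul_of_nonneg_left (show I ≤ t * (g w - g p) by linarith) (le_of_lt (one_div_pos.2 ht))
  rw [← mul_assoc, one_div_mul_cancel ht.ne', one_mul] at h6
  linarith

lemma descent_lemma {n : ℕ} (L : ℝ) (hL : 0 < L)
    (f : EuclideanSpace ℝ (Fin n) → ℝ) (f' : EuclideanSpace ℝ (Fin n) → EuclideanSpace ℝ (Fin n))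
    (hf : ∀ x, HasGradientAt f (f' x) x)
    (hlip : ∀ x y, ‖f' x - f' y‖ ≤ L * ‖x - y‖)
    (a b : EuclideanSpace ℝ (Fin n)) :
    f b ≤ f a + ⟪f' a, b - a⟫ + L / 2 * ‖b - a‖ ^ 2 := by
  set v := b - a with hv
  have hc : ∀ t : ℝ, HasDerivAt (fun t : ℝ => a + t • v) v t := by
    intro t
    simpa using ((hasDerivAt_id t).smul_const v).const_add a
  have hφ : ∀ t : ℝ, HasDerivAt (fun t : ℝ => f (a + t • v)) ⟪f' (a + t • v), v⟫ t := by
    intro t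
    have h1 : HasFDerivAt f (InnerProductSpace.toDual ℝ _ (f' (a + t • v))) (a + t • v) := hf _
    exact h1.comp_hasDerivAt t (hc t)
  have hcontf' : Continuous f' := by
    have : LipschitzWith (Real.toNNReal L) f' := by
      apply LipschitzWith.of_dist_le_mul
      intro p q
      rw [dist_eq_norm, dist_eq_norm]
      simpa [Real.coe_toNNReal L hL.le] using hlip p q
    exact this.continuous
  have hcont2 : Continuous fun t : ℝ => ⟪f' (a + t • v), v⟫ := by
    exact Continuous.inner (hcontf'.comp (by continuity)) continuous_const
  have hFTC : f b - f a = ∫ t in (0:ℝ)..1, ⟪f' (a + t • v), v⟫ := by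
    have h := intervalIntegral.integral_eq_sub_of_hasDerivAt (fun t _ => hφ t)
      (hcont2.intervalIntegrable 0 1)
    rw [h]
    norm_num [hv]
  have hcont3 : Continuous fun t : ℝ => ⟪f' a, v⟫ + L * t * ‖v‖ ^ 2 := by continuity
  have hbound : ∫ t in (0:ℝ)..1, ⟪f' (a + t • v), v⟫
      ≤ ∫ t in (0:ℝ)..1, (⟪f' a, v⟫ + L * t * ‖v‖ ^ 2) := by
    apply intervalIntegral.integral_mono_on zero_le_one (hcont2.intervalIntegrable 0 1)
      (hcont3.intervalIntegrable 0 1)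
    intro t ht
    have h1 : ⟪f' (a + t • v) - f' a, v⟫ ≤ L * t * ‖v‖ ^ 2 := by
      calc ⟪f' (a + t • v) - f' a, v⟫ ≤ ‖f' (a + t • v) - f' a‖ * ‖v‖ := real_inner_le_norm _ _
        _ ≤ (L * ‖(a + t • v) - a‖) * ‖v‖ :=
            mul_le_mul_of_nonneg_right (hlip _ _) (norm_nonneg _)
        _ = L * t * ‖v‖ ^ 2 := by
            have : (a + t • v) - a = t • v := by abel
            rw [this, norm_smul]
            simp [abs_of_nonneg ht.1]
            ring
    have h2 : ⟪f' (a + t • v), v⟫ = ⟪f' a, v⟫ + ⟪f' (a + t • v) - f' a, v⟫ := by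
      rw [inner_sub_left]; ring
    linarith
  have hval : ∫ t in (0:ℝ)..1, (⟪f' a, v⟫ + L * t * ‖v‖ ^ 2) = ⟪f' a, v⟫ + L / 2 * ‖v‖ ^ 2 := by
    have h1 : (fun t : ℝ => ⟪f' a, v⟫ + L * t * ‖v‖ ^ 2)
        = fun t : ℝ => ⟪f' a, v⟫ + (L * ‖v‖ ^ 2) * t := by
      funext t; ring
    rw [h1, intervalIntegral.integral_add (intervalIntegrable_const)
      ((continuous_const.fun_mul continuous_id').intervalIntegrable 0 1),
      intervalIntegral.integral_const_mul]
    simp [integral_id]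
    ring
  linarith [hFTC, hbound, hval]

theorem descent_condition (n : ℕ) (L : ℝ) (hL : 0 < L)
    (f : EuclideanSpace ℝ (Fin n) → ℝ) (f' : EuclideanSpace ℝ (Fin n) → EuclideanSpace ℝ (Fin n))
    (hf : ∀ x, HasGradientAt f (f' x) x)
    (hlip : ∀ x y, ‖f' x - f' y‖ ≤ L * ‖x - y‖)
    (g : EuclideanSpace ℝ (Fin n) → ℝ) (hg : ConvexOn ℝ Set.univ g)
    (s α : ℝ) (hs : 0 < s) (hα : 0 < α)
    (x y xp : EuclideanSpace ℝ (Fin n))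
    (hy : ∀ w, g y + ‖y - (x - s • f' x)‖ ^ 2 / (2 * s) ≤ g w + ‖w - (x - s • f' x)‖ ^ 2 / (2 * s))
    (hxp : ∀ w, g xp + ‖xp - (x - α • f' y)‖ ^ 2 / (2 * α) ≤ g w + ‖w - (x - α • f' y)‖ ^ 2 / (2 * α)) :
    (f x + g x) - (f xp + g xp) ≥ (1 / (2 * α)) * ‖x - xp‖ ^ 2
      + (1 / s - L / 2 - 1 / (2 * α)) * ‖x - y‖ ^ 2
      + (1 / (2 * α) - L / 2) * ‖y - xp‖ ^ 2 := by
  set A := ‖x - xp‖ ^ 2 with hA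
  set B := ‖x - y‖ ^ 2 with hB
  set C := ‖y - xp‖ ^ 2 with hC
  set I₁ := ⟪f' x, x - y⟫ with hI₁
  set I₂ := ⟪f' y, y - xp⟫ with hI₂
  set P := ⟪x - xp, y - xp⟫ with hP
  -- descent lemma applications
  have hd1 : f y ≤ f x + ⟪f' x, y - x⟫ + L / 2 * ‖y - x‖ ^ 2 := descent_lemma L hL f f' hf hlip x y
  have hd2 : f xp ≤ f y + ⟪f' y, xp - y⟫ + L / 2 * ‖xp - y‖ ^ 2 := descent_lemma L hL f f' hf hlip y xp
  have e1 : ⟪f' x, y - x⟫ = -I₁ := by rw [hI₁, ← inner_neg_right]; congr 1; abel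
  have e2 : ⟪f' y, xp - y⟫ = -I₂ := by rw [hI₂, ← inner_neg_right]; congr 1; abel
  have e3 : ‖y - x‖ ^ 2 = B := by rw [hB, ← norm_neg]; congr 1; abel
  have e4 : ‖xp - y‖ ^ 2 = C := by rw [hC, ← norm_neg]; congr 1; abel
  rw [e1, e3] at hd1
  rw [e2, e4] at hd2
  -- prox inequalities
  have hp1 : g y + (1 / s) * ⟪(x - s • f' x) - y, x - y⟫ ≤ g x :=
    prox_subgrad g hg s hs (x - s • f' x) y hy x
  have hp2 : g xp + (1 / α) * ⟪(x - α • f' y) - xp, y - xp⟫ ≤ g y :=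
    prox_subgrad g hg α hα (x - α • f' y) xp hxp y
  have e5 : ⟪(x - s • f' x) - y, x - y⟫ = B - s * I₁ := by
    have : (x - s • f' x) - y = (x - y) - s • f' x := by abel
    rw [this, inner_sub_left, real_inner_smul_left, hB, real_inner_self_eq_norm_sq, hI₁,
      real_inner_comm]
  have e6 : ⟪(x - α • f' y) - xp, y - xp⟫ = P - α * I₂ := by
    have : (x - α • f' y) - xp = (x - xp) - α • f' y := by abel
    rw [this, inner_sub_left, real_inner_smul_left, hP, hI₂, real_inner_comm]
  rw [e5] at hp1
  rw [e6] at hp2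
  -- clear the denominators in the prox inequalities
  have hs1 : (1 / s) * (B - s * I₁) = (1 / s) * B - I₁ := by
    field_simp
  have ha1 : (1 / α) * (P - α * I₂) = (1 / α) * P - I₂ := by
    field_simp
  -- polarization
  have hpol : (1 / α) * P = (1 / (2 * α)) * A + (1 / (2 * α)) * C - (1 / (2 * α)) * B := by
    have h1 : x - y = (x - xp) - (y - xp) := by abel
    have h2 : B = A - 2 * P + C := by
      rw [hB, h1, norm_sub_sq_real, hA, hC, hP]
    have h3 : (1 / (2 * α)) * (2 * P) = (1 / α) * P := by
      field_simp
    have h2' : 2 * P = A + C - B := by linarith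
    calc (1 / α) * P = (1 / (2 * α)) * (2 * P) := h3.symm
      _ = (1 / (2 * α)) * (A + C - B) := by rw [h2']
      _ = (1 / (2 * α)) * A + (1 / (2 * α)) * C - (1 / (2 * α)) * B := by ring
  rw [hs1] at hp1
  rw [ha1] at hp2
  linarith [hd1, hd2, hp1, hp2, hpol]
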